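/- The squares of the tropical square-root letters are monomials in the asymptotic-chamber cone variables of the scattering diagram: define x_{γ₁}⁺ = y₁·C̃₋⁻², x_{γ₂}⁺ = y₂·C₊², the wall-crossing function f = y₂·C₋²·C̃₋/C̃₊, and x_{γ₁}⁻ = x_{γ₁}⁺·f², x_{γ₂}⁻ = x_{γ₂}⁺·f⁻². Then (C₊/C₋)² = (x_{γ₁}⁺·x_{γ₁}⁻)⁻¹ and (C̃₊/C̃₋)² = x_{γ₂}⁺·x_{γ₂}⁻·(x_{γ₁}⁺·x_{γ₁}⁻)². -/

import Mathlib

/-- The squares of the tropical square-root letters are monomials in the asymptotic-chamber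
cone variables of the scattering diagram. -/
theorem a11_letters_from_cone_variables {F : Type*} [Field F] (x₁ x₂ a₀ b₀ : F)
    (hx₁ : x₁ ≠ 0) (hx₂ : x₂ ≠ 0) (ha₀ : a₀ ≠ 0) (hb₀ : b₀ ≠ 0)
    (K₁ K₂ : F) (hK₁ : K₁ = 1 + x₁ + x₁ * x₂) (hK₂ : K₂ = x₁ * x₂)
    (s : F) (hs : s ≠ 0) (hs2 : s ^ 2 = K₁ ^ 2 - 4 * K₂)
    (Cp Cm Ctp Ctm y₁ y₂ : F)
    (hCp : Cp = a₀ * (2 - K₁ + s) / (2 * s))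
    (hCm : Cm = a₀ * (-2 + K₁ + s) / (2 * s))
    (hCtp : Ctp = b₀ * (2 * K₂ - K₁ + s) / (2 * s))
    (hCtm : Ctm = b₀ * (-(2 * K₂) + K₁ + s) / (2 * s))
    (hy₁ : y₁ = b₀ ^ 2 * x₁) (hy₂ : y₂ = x₂ / a₀ ^ 2)
    (xg1p xg2p f xg1m xg2m : F)
    (hxg1p : xg1p = y₁ * Ctm⁻¹ ^ 2) (hxg2p : xg2p = y₂ * Cp ^ 2)
    (hf : f = y₂ * Cm ^ 2 * Ctm / Ctp)
    (hxg1m : xg1m = xg1p * f ^ 2) (hxg2m : xg2m = xg2p * f⁻¹ ^ 2) :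
    (Cp / Cm) ^ 2 = (xg1p * xg1m)⁻¹ ∧
    (Ctp / Ctm) ^ 2 = xg2p * xg2m * (xg1p * xg1m) ^ 2 := by
  by_cases h2 : (2 : F) = 0
  · have hz : (2 : F) * s = 0 := by rw [h2]; ring
    rw [hz, div_zero] at hCp hCm hCtp hCtm
    subst hCp hCm hCtp hCtm hxg1p hxg2p hxg1m hxg2m hf
    simp
  · have hCpCm : Cp * Cm * s ^ 2 = a₀ ^ 2 * x₁ := by
      rw [hCp, hCm, hK₁, hK₂] at *
      field_simp
      linear_combination hs2
    have hCtpCtm : Ctp * Ctm * s ^ 2 = b₀ ^ 2 * x₁ ^ 2 * x₂ := by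
      rw [hCtp, hCtm, hK₁, hK₂] at *
      field_simp
      linear_combination hs2
    have hax : a₀ ^ 2 * x₁ ≠ 0 := mul_ne_zero (pow_ne_zero _ ha₀) hx₁
    have hbx : b₀ ^ 2 * x₁ ^ 2 * x₂ ≠ 0 :=
      mul_ne_zero (mul_ne_zero (pow_ne_zero _ hb₀) (pow_ne_zero _ hx₁)) hx₂
    have hCp0 : Cp ≠ 0 := fun h => hax (by rw [← hCpCm, h]; ring)
    have hCm0 : Cm ≠ 0 := fun h => hax (by rw [← hCpCm, h]; ring)
    have hCtp0 : Ctp ≠ 0 := fun h => hbx (by rw [← hCtpCtm, h]; ring)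
    have hCtm0 : Ctm ≠ 0 := fun h => hbx (by rw [← hCtpCtm, h]; ring)
    have L1s : b₀ ^ 2 * x₁ * x₂ * (Cm * Cp) * s ^ 2 = a₀ ^ 2 * (Ctm * Ctp) * s ^ 2 := by
      linear_combination b₀ ^ 2 * x₁ * x₂ * hCpCm - a₀ ^ 2 * hCtpCtm
    have L1 : b₀ ^ 2 * x₁ * x₂ * (Cm * Cp) = a₀ ^ 2 * (Ctm * Ctp) :=
      mul_right_cancel₀ (pow_ne_zero 2 hs) L1s
    subst hxg1m hxg2m hxg1p hxg2p hf hy₁ hy₂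
    have L2 : (b₀ ^ 2 * x₁ * x₂ * (Cm * Cp)) ^ 2 = (a₀ ^ 2 * (Ctm * Ctp)) ^ 2 := by rw [L1]
    have L4 : (b₀ ^ 2 * x₁ * x₂ * (Cm * Cp)) ^ 4 = (a₀ ^ 2 * (Ctm * Ctp)) ^ 4 := by rw [L1]
    constructor
    · field_simp
      linear_combination L2
    · field_simp
      linear_combination (-1) * L4
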